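/- For all positive integers m and n, the sum of the n-th powers of the first m positive integers satisfies ∑_{i=1}^m i^n = ∑_{k=0}^{n-1} A_{n,k} · C(m+k+1, n+1), where C denotes the binomial coefficient. -/

import Mathlib

open scoped Classical

/-- Number of ascents of a permutation of `Fin n`:
positions `j` with `j + 1 < n` and `π j < π (j+1)`. -/
noncomputable def ascentCount {n : ℕ} (π : Equiv.Perm (Fin n)) : ℕ :=
  ((Finset.range (n - 1)).filter (fun j =>
    ∃ h : j + 1 < n, π ⟨j, Nat.lt_of_succ_lt h⟩ < π ⟨j + 1, h⟩)).card

/-- The Eulerian number `A_{n,k}`: the number of permutations of an `n`-element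
linearly ordered set with exactly `k` ascents. -/
noncomputable def eulerian (n k : ℕ) : ℕ :=
  (Finset.univ.filter (fun π : Equiv.Perm (Fin n) => ascentCount π = k)).card

/-- The `n`-th Eulerian polynomial `A_n(t) = ∑_{k=0}^{n-1} A_{n,k} t^k`, with `A_0(t) = 1`. -/
noncomputable def eulerianPoly (n : ℕ) (t : ℝ) : ℝ :=
  if n = 0 then 1 else ∑ k ∈ Finset.range n, (eulerian n k : ℝ) * t ^ k

/-- The ascent set of a permutation. -/
noncomputable def Aset (n : ℕ) (σ : Equiv.Perm (Fin n)) : Finset ℕ :=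
  (Finset.range (n - 1)).filter (fun j =>
    ∃ h : j + 1 < n, σ ⟨j, Nat.lt_of_succ_lt h⟩ < σ ⟨j + 1, h⟩)

lemma ascentCount_eq_card_Aset {n : ℕ} (σ : Equiv.Perm (Fin n)) :
    ascentCount σ = (Aset n σ).card := rfl

lemma mem_Aset_iff {n : ℕ} (σ : Equiv.Perm (Fin n)) (j : ℕ) (hj : j + 1 < n) :
    j ∈ Aset n σ ↔ σ ⟨j, Nat.lt_of_succ_lt hj⟩ < σ ⟨j + 1, hj⟩ := by
  simp only [Aset, Finset.mem_filter, Finset.mem_range]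
  constructor
  · rintro ⟨-, h', hlt⟩
    exact hlt
  · intro h
    exact ⟨by omega, hj, h⟩

/-- Number of ascents strictly below `j`. -/
noncomputable def cfun (n : ℕ) (σ : Equiv.Perm (Fin n)) (j : ℕ) : ℕ :=
  ((Aset n σ) ∩ Finset.range j).card

lemma cfun_le_ascentCount {n : ℕ} (σ : Equiv.Perm (Fin n)) (j : ℕ) :
    cfun n σ j ≤ ascentCount σ :=
  Finset.card_le_card (Finset.inter_subset_left)

lemma cfun_le_self {n : ℕ} (σ : Equiv.Perm (Fin n)) (j : ℕ) : cfun n σ j ≤ j := by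
  have := Finset.card_le_card (Finset.inter_subset_right (s₁ := Aset n σ) (s₂ := Finset.range j))
  simpa [cfun] using this

lemma cfun_succ_of_mem {n : ℕ} (σ : Equiv.Perm (Fin n)) {j : ℕ} (hj : j ∈ Aset n σ) :
    cfun n σ (j + 1) = cfun n σ j + 1 := by
  unfold cfun
  rw [Finset.range_add_one, Finset.inter_comm, Finset.insert_inter_of_mem hj,
    Finset.card_insert_of_notMem, Finset.inter_comm]
  simp

lemma cfun_succ_of_not_mem {n : ℕ} (σ : Equiv.Perm (Fin n)) {j : ℕ} (hj : j ∉ Aset n σ) :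
    cfun n σ (j + 1) = cfun n σ j := by
  unfold cfun
  rw [Finset.range_add_one, Finset.inter_comm, Finset.insert_inter_of_notMem hj, Finset.inter_comm]

lemma cfun_eq_of_ge {n : ℕ} (σ : Equiv.Perm (Fin n)) {j : ℕ} (hj : n - 1 ≤ j) :
    cfun n σ j = ascentCount σ := by
  unfold cfun
  rw [Finset.inter_eq_left.mpr, ascentCount_eq_card_Aset]
  exact (Finset.filter_subset _ _).trans (Finset.range_subset_range.mpr hj)

/-- Condition on `g = f ∘ σ` characterizing `Tuple.sort f = σ`. -/
def Gcond {n x : ℕ} (σ : Equiv.Perm (Fin n)) (g : Fin n → Fin x) : Prop :=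
  Monotone g ∧ ∀ (j : ℕ) (hj : j + 1 < n),
    ¬ (σ ⟨j, Nat.lt_of_succ_lt hj⟩ < σ ⟨j + 1, hj⟩) →
      g ⟨j, Nat.lt_of_succ_lt hj⟩ < g ⟨j + 1, hj⟩

lemma fin_chain' {n : ℕ} {r : Fin n → Fin n → Prop}
    (ht : ∀ a b c, r a b → r b c → r a c)
    (h : ∀ (j : ℕ) (hj : j + 1 < n), r ⟨j, Nat.lt_of_succ_lt hj⟩ ⟨j + 1, hj⟩) :
    ∀ i j : Fin n, i < j → r i j := by
  have key : ∀ (k i : ℕ) (hi : i < n) (hk : i + k + 1 < n), r ⟨i, hi⟩ ⟨i + k + 1, hk⟩ := by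
    intro k
    induction k with
    | zero => intro i hi hk; exact h i hk
    | succ k ih =>
      intro i hi hk
      have h1 : i + k + 1 < n := by omega
      exact ht _ _ _ (ih i hi h1) (h (i + k + 1) hk)
  intro i j hij
  have hij' : (i : ℕ) < j := hij
  obtain ⟨k, hk⟩ : ∃ k, (j : ℕ) = (i : ℕ) + k + 1 := ⟨(j : ℕ) - i - 1, by omega⟩
  have hj : (i : ℕ) + k + 1 < n := hk ▸ j.isLt
  have hje : j = ⟨(i : ℕ) + k + 1, hj⟩ := Fin.ext hk
  rw [hje]
  exact key k i i.isLt hj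

lemma sort_eq_iff_Gcond {n x : ℕ} (σ : Equiv.Perm (Fin n)) (f : Fin n → Fin x) :
    Tuple.sort f = σ ↔ Gcond σ (f ∘ σ) := by
  rw [eq_comm, Tuple.eq_sort_iff]
  constructor
  · rintro ⟨hm, hfull⟩
    refine ⟨hm, ?_⟩
    intro j hj hno
    have hlt : (⟨j, Nat.lt_of_succ_lt hj⟩ : Fin n) < ⟨j + 1, hj⟩ := by
      simp [Fin.lt_def]
    rcases lt_or_eq_of_le (hm hlt.le) with h | h
    · exact h
    · exact absurd (hfull _ _ hlt h) hno
  · rintro ⟨hm, hadj⟩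
    refine ⟨hm, ?_⟩
    intro i j hij heq
    have := fin_chain'
      (r := fun a b => (f ∘ σ) a ≤ (f ∘ σ) b ∧ ((f ∘ σ) a = (f ∘ σ) b → σ a < σ b))
      (fun a b c h1 h2 => ⟨h1.1.trans h2.1, fun he => by
        have hab : (f ∘ σ) a = (f ∘ σ) b := le_antisymm h1.1 (he ▸ h2.1)
        have hbc : (f ∘ σ) b = (f ∘ σ) c := le_antisymm h2.1 (hab ▸ he ▸ le_refl _)
        exact (h1.2 hab).trans (h2.2 hbc)⟩)
      (fun j hj => by
        have hlt : (⟨j, Nat.lt_of_succ_lt hj⟩ : Fin n) < ⟨j + 1, hj⟩ := by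
          simp [Fin.lt_def]
        refine ⟨hm hlt.le, fun he => ?_⟩
        by_contra hno
        exact absurd he (ne_of_lt (hadj j hj hno)))
      i j hij
    exact this.2 heq

lemma cardF_eq_cardG {n x : ℕ} (σ : Equiv.Perm (Fin n)) :
    ((Finset.univ : Finset (Fin n → Fin x)).filter (fun f => Tuple.sort f = σ)).card
      = ((Finset.univ : Finset (Fin n → Fin x)).filter (fun g => Gcond σ g)).card := by
  apply Finset.card_bij' (i := fun f _ => f ∘ σ) (j := fun g _ => g ∘ ⇑σ⁻¹)
  case hi =>
    intro f hf
    rw [Finset.mem_filter] at hf ⊢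
    exact ⟨Finset.mem_univ _, (sort_eq_iff_Gcond σ f).mp hf.2⟩
  case hj =>
    intro g hg
    rw [Finset.mem_filter] at hg ⊢
    refine ⟨Finset.mem_univ _, ?_⟩
    rw [sort_eq_iff_Gcond]
    have : (g ∘ ⇑σ⁻¹) ∘ ⇑σ = g := by
      funext t; simp
    rw [this]
    exact hg.2
  case left_inv =>
    intro f hf
    funext t; simp
  case right_inv =>
    intro g hg
    funext t; simp

lemma card_strictMono_fin (k M : ℕ) :
    ((Finset.univ : Finset (Fin k → Fin M)).filter (fun h => StrictMono h)).card
      = M.choose k := by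
  have hpc := Finset.card_powersetCard k (Finset.univ : Finset (Fin M))
  rw [Finset.card_univ, Fintype.card_fin] at hpc
  rw [← hpc]
  apply Finset.card_bij' (i := fun h _ => Finset.univ.image h)
    (j := fun s hs => (s.orderEmbOfFin ((Finset.mem_powersetCard.mp hs).2) : Fin k → Fin M))
  case hi =>
    intro h hh
    rw [Finset.mem_filter] at hh
    rw [Finset.mem_powersetCard]
    exact ⟨Finset.subset_univ _, by
      rw [Finset.card_image_of_injective _ hh.2.injective, Finset.card_univ, Fintype.card_fin]⟩
  case hj =>
    intro s hs
    rw [Finset.mem_filter]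
    exact ⟨Finset.mem_univ _, (s.orderEmbOfFin _).strictMono⟩
  case left_inv =>
    intro h hh
    rw [Finset.mem_filter] at hh
    exact (Finset.orderEmbOfFin_unique _ (fun x => Finset.mem_image_of_mem _ (Finset.mem_univ x))
      hh.2).symm
  case right_inv =>
    intro s hs
    apply Finset.coe_injective
    rw [Finset.coe_image, Finset.coe_univ, Set.image_univ, Finset.range_orderEmbOfFin]

lemma cardG_eq {n x : ℕ} (σ : Equiv.Perm (Fin n)) :
    ((Finset.univ : Finset (Fin n → Fin x)).filter (fun g => Gcond σ g)).card
      = (x + ascentCount σ).choose n := by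
  set a := ascentCount σ with ha
  rw [← card_strictMono_fin n (x + a)]
  have hc_le_a : ∀ j : ℕ, cfun n σ j ≤ a := fun j => cfun_le_ascentCount σ j
  have hcc : ∀ j : ℕ, cfun n σ (j + 1) ≤ cfun n σ j + 1 := by
    intro j
    by_cases hj : j ∈ Aset n σ
    · rw [cfun_succ_of_mem σ hj]
    · rw [cfun_succ_of_not_mem σ hj]; omega
  have hle : ∀ (h : Fin n → Fin (x + a)), StrictMono h →
      ∀ (j : ℕ) (hj : j < n), j ≤ (h ⟨j, hj⟩ : ℕ) := by
    intro h hsm j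
    induction j with
    | zero => intro hj; exact Nat.zero_le _
    | succ j ih =>
      intro hj
      have hj' : j < n := by omega
      have h3 : (h ⟨j, hj'⟩ : ℕ) < (h ⟨j + 1, hj⟩ : ℕ) :=
        hsm (show (⟨j, hj'⟩ : Fin n) < ⟨j + 1, hj⟩ by simp [Fin.lt_def])
      have h2 := ih hj'
      omega
  have hle' : ∀ (h : Fin n → Fin (x + a)), StrictMono h →
      ∀ j : Fin n, (j : ℕ) ≤ (h j : ℕ) := by
    intro h hsm j
    simpa using hle h hsm j j.isLt
  have hkey : ∀ (h : Fin n → Fin (x + a)), StrictMono h →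
      ∀ (j : ℕ) (hj : j < n), (h ⟨j, hj⟩ : ℕ) < x + cfun n σ j := by
    intro h hsm
    have main : ∀ (d j : ℕ) (hj : j < n), n ≤ j + 1 + d →
        (h ⟨j, hj⟩ : ℕ) < x + cfun n σ j := by
      intro d
      induction d with
      | zero =>
        intro j hj hle2
        have hcj : cfun n σ j = a := cfun_eq_of_ge σ (by omega)
        have := (h ⟨j, hj⟩).isLt
        omega
      | succ d ih =>
        intro j hj hle2
        by_cases hj1 : j + 1 < n
        · have h2 := ih (j + 1) hj1 (by omega)
          have h3 : (h ⟨j, hj⟩ : ℕ) < (h ⟨j + 1, hj1⟩ : ℕ) :=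
            hsm (show (⟨j, hj⟩ : Fin n) < ⟨j + 1, hj1⟩ by simp [Fin.lt_def])
          have h4 := hcc j
          omega
        · have hcj : cfun n σ j = a := cfun_eq_of_ge σ (by omega)
          have := (h ⟨j, hj⟩).isLt
          omega
    intro j hj
    exact main (n - 1 - j) j hj (by omega)
  have hkey' : ∀ (h : Fin n → Fin (x + a)), StrictMono h →
      ∀ j : Fin n, (h j : ℕ) < x + cfun n σ (j : ℕ) := by
    intro h hsm j
    simpa using hkey h hsm j j.isLt
  apply Finset.card_bij'
    (i := fun g _ => fun j : Fin n =>
      (⟨(g j : ℕ) + cfun n σ (j : ℕ), by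
        have h1 := (g j).isLt
        have h2 := hc_le_a (j : ℕ)
        omega⟩ : Fin (x + a)))
    (j := fun h hh => fun j : Fin n =>
      (⟨(h j : ℕ) - cfun n σ (j : ℕ), by
        have h1 := hkey' h (Finset.mem_filter.mp hh).2 j
        have h2 := hle' h (Finset.mem_filter.mp hh).2 j
        have h5 : cfun n σ (j : ℕ) ≤ (j : ℕ) := cfun_le_self σ (j : ℕ)
        omega⟩ : Fin x))
  case hi =>
    intro g hg
    rw [Finset.mem_filter] at hg ⊢
    refine ⟨Finset.mem_univ _, ?_⟩
    obtain ⟨hmono, hstrict⟩ := hg.2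
    have key := fin_chain' (n := n)
      (r := fun i j : Fin n => (g i : ℕ) + cfun n σ (i : ℕ) < (g j : ℕ) + cfun n σ (j : ℕ))
      (fun a b c h1 h2 => h1.trans h2)
      (fun jj hjj => by
        have hmle : (g ⟨jj, Nat.lt_of_succ_lt hjj⟩ : ℕ) ≤ (g ⟨jj + 1, hjj⟩ : ℕ) :=
          hmono (show (⟨jj, Nat.lt_of_succ_lt hjj⟩ : Fin n) ≤ ⟨jj + 1, hjj⟩ by
            simp [Fin.le_def])
        by_cases hA : jj ∈ Aset n σ
        · have hc := cfun_succ_of_mem σ hA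
          simp only []
          omega
        · have hc := cfun_succ_of_not_mem σ hA
          have hno : ¬ (σ ⟨jj, Nat.lt_of_succ_lt hjj⟩ < σ ⟨jj + 1, hjj⟩) := by
            intro hlt
            exact hA ((mem_Aset_iff σ jj hjj).mpr hlt)
          have hgs : (g ⟨jj, Nat.lt_of_succ_lt hjj⟩ : ℕ) < (g ⟨jj + 1, hjj⟩ : ℕ) :=
            hstrict jj hjj hno
          simp only []
          omega)
    intro i j hij
    simp only [Fin.mk_lt_mk]
    exact key i j hij
  case hj =>
    intro h hh
    rw [Finset.mem_filter] at hh ⊢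
    refine ⟨Finset.mem_univ _, ?_⟩
    have hsm := hh.2
    constructor
    · -- Monotone
      have key := fin_chain' (n := n)
        (r := fun i j : Fin n => (h i : ℕ) - cfun n σ (i : ℕ) ≤ (h j : ℕ) - cfun n σ (j : ℕ))
        (fun a b c h1 h2 => h1.trans h2)
        (fun jj hjj => by
          have h3 : (h ⟨jj, Nat.lt_of_succ_lt hjj⟩ : ℕ) < (h ⟨jj + 1, hjj⟩ : ℕ) :=
            hsm (show (⟨jj, Nat.lt_of_succ_lt hjj⟩ : Fin n) < ⟨jj + 1, hjj⟩ by
              simp [Fin.lt_def])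
          have h4 := hcc jj
          simp only []
          omega)
      intro i j hij
      rcases eq_or_lt_of_le hij with rfl | hlt
      · exact le_rfl
      · simp only [Fin.mk_le_mk]
        exact key i j hlt
    · -- strict at non-ascents
      intro jj hjj hno
      have hA : jj ∉ Aset n σ := fun hA => hno ((mem_Aset_iff σ jj hjj).mp hA)
      have hc := cfun_succ_of_not_mem σ hA
      have h3 : (h ⟨jj, Nat.lt_of_succ_lt hjj⟩ : ℕ) < (h ⟨jj + 1, hjj⟩ : ℕ) :=
        hsm (show (⟨jj, Nat.lt_of_succ_lt hjj⟩ : Fin n) < ⟨jj + 1, hjj⟩ by simp [Fin.lt_def])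
      have h5 : cfun n σ jj ≤ jj := cfun_le_self σ jj
      have h6 : (jj : ℕ) ≤ (h ⟨jj, Nat.lt_of_succ_lt hjj⟩ : ℕ) := hle h hsm jj _
      simp only [Fin.mk_lt_mk]
      omega
  case left_inv =>
    intro g hg
    funext t
    apply Fin.ext
    simp
  case right_inv =>
    intro h hh
    rw [Finset.mem_filter] at hh
    funext t
    apply Fin.ext
    have h1 : cfun n σ (t : ℕ) ≤ (t : ℕ) := cfun_le_self σ t
    have h2 := hle' h hh.2 t
    simp only []
    omega

lemma fiber_card {n x : ℕ} (σ : Equiv.Perm (Fin n)) :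
    ((Finset.univ : Finset (Fin n → Fin x)).filter (fun f => Tuple.sort f = σ)).card
      = (x + ascentCount σ).choose n := by
  rw [cardF_eq_cardG, cardG_eq]

lemma worpitzky (n x : ℕ) (hn : 1 ≤ n) :
    x ^ n = ∑ k ∈ Finset.range n, eulerian n k * (x + k).choose n := by
  have h1 : (Finset.univ : Finset (Fin n → Fin x)).card = x ^ n := by
    simp [Finset.card_univ]
  have h2 := Finset.card_eq_sum_card_fiberwise
    (f := fun f : Fin n → Fin x => Tuple.sort f) (s := Finset.univ) (t := Finset.univ)
    (fun f _ => Finset.mem_univ _)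
  rw [h1] at h2
  rw [h2]
  have h3 : ∀ σ : Equiv.Perm (Fin n), ascentCount σ ∈ Finset.range n := by
    intro σ
    rw [Finset.mem_range, ascentCount_eq_card_Aset]
    have h4 : (Aset n σ).card ≤ n - 1 := le_trans (Finset.card_filter_le _ _) (by simp)
    omega
  rw [← Finset.sum_fiberwise_of_maps_to (g := ascentCount) (fun σ _ => h3 σ)]
  apply Finset.sum_congr rfl
  intro k hk
  rw [eulerian]
  calc ∑ σ ∈ Finset.univ.filter (fun σ : Equiv.Perm (Fin n) => ascentCount σ = k),
        ((Finset.univ : Finset (Fin n → Fin x)).filter (fun f => Tuple.sort f = σ)).card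
      = ∑ σ ∈ Finset.univ.filter (fun σ : Equiv.Perm (Fin n) => ascentCount σ = k),
        (x + k).choose n := by
        apply Finset.sum_congr rfl
        intro σ hσ
        rw [fiber_card, (Finset.mem_filter.mp hσ).2]
    _ = _ := by rw [Finset.sum_const, smul_eq_mul]


/-- `∑_{i=1}^m i^n = ∑_{k=0}^{n-1} A_{n,k} C(m+k+1, n+1)`. -/
theorem sum_pow_eq_sum_eulerian_choose (m n : ℕ) (hm : 1 ≤ m) (hn : 1 ≤ n) :
    ∑ i ∈ Finset.Icc 1 m, i ^ n =
      ∑ k ∈ Finset.range n, eulerian n k * Nat.choose (m + k + 1) (n + 1) := by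
  have h1 : ∑ i ∈ Finset.Icc 1 m, i ^ n
      = ∑ i ∈ Finset.Icc 1 m, ∑ k ∈ Finset.range n, eulerian n k * (i + k).choose n :=
    Finset.sum_congr rfl (fun i _ => worpitzky n i hn)
  rw [h1, Finset.sum_comm]
  apply Finset.sum_congr rfl
  intro k hk
  rw [← Finset.mul_sum]
  congr 1
  have hshift := Finset.sum_map (Finset.Icc 1 m) (addRightEmbedding k) (fun j => j.choose n)
  rw [Finset.map_add_right_Icc] at hshift
  simp only [addRightEmbedding_apply] at hshift
  rw [← hshift]
  have hk' : k + 1 ≤ n := by rw [Finset.mem_range] at hk; omega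
  have hsub : Finset.Icc n (m + k) ⊆ Finset.Icc (1 + k) (m + k) :=
    Finset.Icc_subset_Icc (by omega) le_rfl
  have hzero : ∀ j ∈ Finset.Icc (1 + k) (m + k), j ∉ Finset.Icc n (m + k) →
      j.choose n = 0 := by
    intro j hj hj'
    rw [Finset.mem_Icc] at hj
    have hjn : j < n := by
      by_contra hge
      exact hj' (Finset.mem_Icc.mpr ⟨by omega, hj.2⟩)
    exact Nat.choose_eq_zero_of_lt hjn
  rw [← Finset.sum_subset hsub hzero]
  exact Nat.sum_Icc_choose (m + k) n
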